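/- Let E be a finite-dimensional complex inner product space, let Q and P be self-adjoint operators on E, let Π be the orthogonal projection onto a subspace 𝒫 of E that is invariant under Q (so ΠQ = QΠ), and suppose ⟨x, Q x⟩ ≥ λ₊‖x‖² for every x ∈ 𝒫, where λ₊ ≥ 0. If ṽ is a unit eigenvector of Q + P with eigenvalue λ̃ satisfying 0 ≤ λ̃ < λ₊, then ‖Π ṽ‖ ≤ ‖P‖/(λ₊ − λ̃); consequently the component of ṽ in the orthogonal complement of 𝒫 satisfies ‖ṽ − Π ṽ‖² ≥ 1 − (‖P‖/(λ₊ − λ̃))². -/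

import Mathlib

/-- A low-energy eigenvector of the perturbed Hamiltonian `Q + P` has small
component in the high-energy invariant subspace `K` of `Q`: if `(Q + P)ṽ = λ̃ ṽ`
with `0 ≤ λ̃ < λ₊` and `⟨x, Q x⟩ ≥ λ₊‖x‖²` on `K`, then
`‖Π ṽ‖ ≤ ‖P‖/(λ₊ − λ̃)` and `‖ṽ − Π ṽ‖² ≥ 1 − (‖P‖/(λ₊ − λ̃))²`. -/
theorem high_energy_component_bound
    {E : Type*} [NormedAddCommGroup E] [InnerProductSpace ℂ E] [FiniteDimensional ℂ E]
    (Q P : E →L[ℂ] E) (hQ : IsSelfAdjoint Q) (hP : IsSelfAdjoint P)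
    (K : Submodule ℂ E)
    (hinv : ∀ x : E, ((K.orthogonalProjectionOnto (Q x)) : E) = Q ((K.orthogonalProjectionOnto x) : E))
    (lamPlus : ℝ) (hlamPlus : 0 ≤ lamPlus)
    (hQlow : ∀ x ∈ K, lamPlus * ‖x‖ ^ 2 ≤ (inner ℂ x (Q x) : ℂ).re)
    (v : E) (hv : ‖v‖ = 1) (lam : ℝ) (hlam0 : 0 ≤ lam) (hlam : lam < lamPlus)
    (heig : (Q + P) v = (lam : ℂ) • v) :
    ‖((K.orthogonalProjectionOnto v) : E)‖ ≤ ‖P‖ / (lamPlus - lam) ∧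
      1 - (‖P‖ / (lamPlus - lam)) ^ 2 ≤ ‖v - ((K.orthogonalProjectionOnto v) : E)‖ ^ 2 := by
  set w : E := ((K.orthogonalProjectionOnto v) : E) with hw
  have hwK : w ∈ K := (K.orthogonalProjectionOnto v).2
  have hsub : inner ℂ w (v - w) = (0 : ℂ) :=
    (K.sub_starProjection_mem_orthogonal v) w hwK
  have hwv : (inner ℂ w v : ℂ) = ((‖w‖ ^ 2 : ℝ) : ℂ) := by
    have h : (inner ℂ w v : ℂ) = inner ℂ w (v - w) + inner ℂ w w := by
      rw [← inner_add_right, sub_add_cancel]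
    rw [h, hsub, inner_self_eq_norm_sq_to_K, zero_add]
    norm_cast
  have hQwK : Q w ∈ K := by
    rw [← hinv v]; exact (K.orthogonalProjectionOnto (Q v)).2
  have hself : ((K.orthogonalProjectionOnto (Q w)) : E) = Q w :=
    K.starProjection_eq_self_iff.mpr hQwK
  have hwQ : (inner ℂ w (Q v) : ℂ) = inner ℂ w (Q w) := by
    calc (inner ℂ w (Q v) : ℂ) = inner ℂ v ((K.orthogonalProjectionOnto (Q v)) : E) := by
          rw [hw]; exact K.inner_starProjection_left_eq_right v (Q v)
      _ = inner ℂ v (Q w) := by rw [hinv v, ← hw]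
      _ = inner ℂ v ((K.orthogonalProjectionOnto (Q w)) : E) := by rw [hself]
      _ = inner ℂ w (Q w) := by
          rw [hw]; exact (K.inner_starProjection_left_eq_right v (Q w)).symm
  have hPv : |(inner ℂ w (P v) : ℂ).re| ≤ ‖P‖ * ‖w‖ := by
    calc |(inner ℂ w (P v) : ℂ).re| ≤ ‖(inner ℂ w (P v) : ℂ)‖ := Complex.abs_re_le_norm _
      _ ≤ ‖w‖ * ‖P v‖ := norm_inner_le_norm _ _
      _ ≤ ‖w‖ * (‖P‖ * ‖v‖) :=
          mul_le_mul_of_nonneg_left (P.le_opNorm v) (norm_nonneg _)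
      _ = ‖P‖ * ‖w‖ := by rw [hv]; ring
  have key : (lamPlus - lam) * ‖w‖ ^ 2 ≤ ‖P‖ * ‖w‖ := by
    have h2 : (inner ℂ w ((Q + P) v) : ℂ) = ((lam * ‖w‖ ^ 2 : ℝ) : ℂ) := by
      rw [heig, inner_smul_right, hwv]; push_cast; ring
    have h3 : (inner ℂ w (Q v) : ℂ).re + (inner ℂ w (P v) : ℂ).re = lam * ‖w‖ ^ 2 := by
      have h : (inner ℂ w (Q v) : ℂ) + inner ℂ w (P v) = ((lam * ‖w‖ ^ 2 : ℝ) : ℂ) := by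
        rw [← inner_add_right, ← ContinuousLinearMap.add_apply, h2]
      have := congrArg Complex.re h
      simpa [← Complex.ofReal_pow] using this
    have h4 : lamPlus * ‖w‖ ^ 2 ≤ (inner ℂ w (Q v) : ℂ).re := by
      rw [hwQ]; exact hQlow w hwK
    nlinarith [abs_le.mp hPv]
  have hle : ‖w‖ ≤ ‖P‖ / (lamPlus - lam) := by
    rcases eq_or_lt_of_le (norm_nonneg w) with h0 | h0
    · rw [← h0]
      exact div_nonneg (norm_nonneg _) (by linarith)
    · rw [le_div_iff₀ (by linarith)]
      nlinarith
  refine ⟨hle, ?_⟩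
  have hpyth : ‖w‖ ^ 2 + ‖v - w‖ ^ 2 = 1 := by
    have h := norm_add_sq (𝕜 := ℂ) w (v - w)
    rw [add_sub_cancel, hv] at h
    have hre : RCLike.re (inner ℂ w (v - w) : ℂ) = 0 := by
      rw [hsub]; simp
    rw [hre] at h
    nlinarith [h]
  have h5 : ‖w‖ ^ 2 ≤ (‖P‖ / (lamPlus - lam)) ^ 2 :=
    pow_le_pow_left₀ (norm_nonneg _) hle 2
  linarith
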